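/- If C₀(g,l) is the identity automorphism of C₀(V,q), where g is a self-similarity of a ternary quadratic form q on free V = R³ with multiplier l, then g = l⁻¹·det(g)·Id_V; moreover if l = 1 (g is an isometry) then g = det(g)·Id_V with det(g)² = 1. -/

import Mathlib

noncomputable section

open CliffordAlgebra

def auxF {R : Type*} [CommRing R] (B : LinearMap.BilinMap R (Fin 3 → R) R) :
    (Fin 3 → R) →ₗ[R] (R × (R × R × R) × (R × R × R) × R) →ₗ[R] (R × (R × R × R) × (R × R × R) × R) :=
  LinearMap.mk₂ R
    (fun v x =>
      (B v (Pi.single 0 1) * x.2.1.1 + B v (Pi.single 1 1) * x.2.1.2.1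
          + B v (Pi.single 2 1) * x.2.1.2.2,
       (x.1 * v 0 - B v (Pi.single 1 1) * x.2.2.1.1 - B v (Pi.single 2 1) * x.2.2.1.2.1,
        x.1 * v 1 + B v (Pi.single 0 1) * x.2.2.1.1 - B v (Pi.single 2 1) * x.2.2.1.2.2,
        x.1 * v 2 + B v (Pi.single 0 1) * x.2.2.1.2.1 + B v (Pi.single 1 1) * x.2.2.1.2.2),
       (v 0 * x.2.1.2.1 - v 1 * x.2.1.1 + B v (Pi.single 2 1) * x.2.2.2,
        v 0 * x.2.1.2.2 - v 2 * x.2.1.1 - B v (Pi.single 1 1) * x.2.2.2,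
        v 1 * x.2.1.2.2 - v 2 * x.2.1.2.1 + B v (Pi.single 0 1) * x.2.2.2),
       v 2 * x.2.2.1.1 - v 1 * x.2.2.1.2.1 + v 0 * x.2.2.1.2.2))
    (fun u v x => by
      simp only [map_add, LinearMap.add_apply, Pi.add_apply, Prod.mk_add_mk, Prod.mk.injEq]
      refine ⟨by ring, ⟨by ring, by ring, by ring⟩, ⟨by ring, by ring, by ring⟩, by ring⟩)
    (fun c v x => by
      simp only [map_smul, LinearMap.smul_apply, Pi.smul_apply, smul_eq_mul, Prod.smul_mk,
        Prod.mk.injEq]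
      refine ⟨by ring, ⟨by ring, by ring, by ring⟩, ⟨by ring, by ring, by ring⟩, by ring⟩)
    (fun v x y => by
      simp only [Prod.fst_add, Prod.snd_add, Prod.mk_add_mk, Prod.mk.injEq]
      refine ⟨by ring, ⟨by ring, by ring, by ring⟩, ⟨by ring, by ring, by ring⟩, by ring⟩)
    (fun c v x => by
      simp only [Prod.smul_fst, Prod.smul_snd, smul_eq_mul, Prod.smul_mk, Prod.mk.injEq]
      refine ⟨by ring, ⟨by ring, by ring, by ring⟩, ⟨by ring, by ring, by ring⟩, by ring⟩)

theorem auxF_sq {R : Type*} [CommRing R] (B : LinearMap.BilinMap R (Fin 3 → R) R)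
    (v : Fin 3 → R) (x : R × (R × R × R) × (R × R × R) × R) :
    auxF B v (auxF B v x) = (B v v) • x := by
  have hv : v = v 0 • (Pi.single 0 1 : Fin 3 → R) + v 1 • (Pi.single 1 1 : Fin 3 → R)
      + v 2 • (Pi.single 2 1 : Fin 3 → R) := by
    funext k; fin_cases k <;> simp
  have hBvv : B v v = v 0 * B v (Pi.single 0 1) + v 1 * B v (Pi.single 1 1)
      + v 2 * B v (Pi.single 2 1) := by
    conv_lhs => rw [show B v v = B v (v 0 • (Pi.single 0 1 : Fin 3 → R)
      + v 1 • (Pi.single 1 1 : Fin 3 → R) + v 2 • (Pi.single 2 1 : Fin 3 → R)) from by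
        rw [← hv]]
    simp [map_add, map_smul, smul_eq_mul]
  obtain ⟨a, ⟨b0, b1, b2⟩, ⟨c0, c1, c2⟩, d⟩ := x
  simp only [auxF, LinearMap.mk₂_apply, Prod.smul_mk, smul_eq_mul, Prod.mk.injEq]
  rw [hBvv]
  refine ⟨by ring, ⟨by ring, by ring, by ring⟩, ⟨by ring, by ring, by ring⟩, by ring⟩

/-- If the induced automorphism `C₀(g,l)` of the even Clifford algebra of a ternary
quadratic form is the identity (i.e. `l⁻¹·(g v)(g w) = v·w` on the generators), then
`g = l⁻¹·det(g)·Id`; moreover, if `l = 1` then `g = det(g)·Id` with `det(g)² = 1`. -/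
theorem even_clifford_id_implies_scalar {R : Type*} [CommRing R]
    (Q : QuadraticForm R (Fin 3 → R))
    (g : (Fin 3 → R) ≃ₗ[R] (Fin 3 → R)) (l : Rˣ)
    (hsim : ∀ v : Fin 3 → R, Q (g v) = (l : R) * Q v)
    (hid : ∀ v w : Fin 3 → R,
      ((l⁻¹ : Rˣ) : R) • (ι Q (g v) * ι Q (g w)) = ι Q v * ι Q w) :
    (∀ v : Fin 3 → R,
      g v = (((l⁻¹ : Rˣ) : R) * LinearMap.det (g : (Fin 3 → R) →ₗ[R] (Fin 3 → R))) • v)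
    ∧ (l = 1 →
        (∀ v : Fin 3 → R,
          g v = (LinearMap.det (g : (Fin 3 → R) →ₗ[R] (Fin 3 → R))) • v)
        ∧ (LinearMap.det (g : (Fin 3 → R) →ₗ[R] (Fin 3 → R))) ^ 2 = 1) := by
  classical
  set B : LinearMap.BilinMap R (Fin 3 → R) R := Q.toBilin (Pi.basisFun R (Fin 3)) with hBdef
  have hQB : ∀ v, Q v = B v v := fun v => by
    conv_lhs => rw [← QuadraticMap.toQuadraticMap_toBilin Q (Pi.basisFun R (Fin 3))]
    rw [LinearMap.BilinMap.toQuadraticMap_apply]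
  have hF : ∀ m x, auxF B m (auxF B m x) = Q m • x := fun m x => by
    rw [auxF_sq, ← hQB]
  set A : Matrix (Fin 3) (Fin 3) R :=
    LinearMap.toMatrix' (g : (Fin 3 → R) →ₗ[R] (Fin 3 → R)) with hAdef
  have key : ∀ v w : Fin 3 → R,
      (((l⁻¹ : Rˣ) : R) * ((g v) 0 * (g w) 1 - (g v) 1 * (g w) 0) = v 0 * w 1 - v 1 * w 0)
    ∧ (((l⁻¹ : Rˣ) : R) * ((g v) 0 * (g w) 2 - (g v) 2 * (g w) 0) = v 0 * w 2 - v 2 * w 0)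
    ∧ (((l⁻¹ : Rˣ) : R) * ((g v) 1 * (g w) 2 - (g v) 2 * (g w) 1) = v 1 * w 2 - v 2 * w 1) := by
    intro v w
    have E := congrArg
      (foldr Q (auxF B) hF ((1:R), ((0:R), (0:R), (0:R)), ((0:R), (0:R), (0:R)), (0:R)))
      (hid v w)
    simp only [map_smul, foldr_mul, foldr_ι] at E
    simp only [auxF, LinearMap.mk₂_apply, one_mul, mul_zero, zero_mul, add_zero, zero_add,
      sub_zero, Prod.smul_mk, smul_eq_mul] at E
    have E1 := congrArg (fun p : R × (R × R × R) × (R × R × R) × R => p.2.2.1.1) E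
    have E2 := congrArg (fun p : R × (R × R × R) × (R × R × R) × R => p.2.2.1.2.1) E
    have E3 := congrArg (fun p : R × (R × R × R) × (R × R × R) × R => p.2.2.1.2.2) E
    exact ⟨E1, E2, E3⟩
  have hl : (l : R) * ((l⁻¹ : Rˣ) : R) = 1 := by
    rw [← Units.val_mul, mul_inv_cancel, Units.val_one]
  set δ : Fin 3 → Fin 3 → R := fun j k => if k = j then 1 else 0 with hδ
  have hgδ : ∀ i k : Fin 3, g (δ i) k = A k i := fun i k => by
    simp [hAdef, hδ, LinearMap.toMatrix'_apply]
    exact congrArg (fun x => g x k) (funext fun k' => by simp [Pi.single_apply])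
  have minor1 : ∀ i j : Fin 3, A 0 i * A 1 j - A 1 i * A 0 j
      = (l : R) * (δ i 0 * δ j 1 - δ i 1 * δ j 0) := fun i j => by
    have h := (key (δ i) (δ j)).1
    rw [hgδ i 0, hgδ i 1, hgδ j 0, hgδ j 1] at h
    linear_combination (l : R) * h - (A 0 i * A 1 j - A 1 i * A 0 j) * hl
  have minor2 : ∀ i j : Fin 3, A 0 i * A 2 j - A 2 i * A 0 j
      = (l : R) * (δ i 0 * δ j 2 - δ i 2 * δ j 0) := fun i j => by
    have h := (key (δ i) (δ j)).2.1
    rw [hgδ i 0, hgδ i 2, hgδ j 0, hgδ j 2] at h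
    linear_combination (l : R) * h - (A 0 i * A 2 j - A 2 i * A 0 j) * hl
  have minor3 : ∀ i j : Fin 3, A 1 i * A 2 j - A 2 i * A 1 j
      = (l : R) * (δ i 1 * δ j 2 - δ i 2 * δ j 1) := fun i j => by
    have h := (key (δ i) (δ j)).2.2
    rw [hgδ i 1, hgδ i 2, hgδ j 1, hgδ j 2] at h
    linear_combination (l : R) * h - (A 1 i * A 2 j - A 2 i * A 1 j) * hl
  have hadj : Matrix.adjugate A = (l : R) • (1 : Matrix (Fin 3) (Fin 3) R) := by
    rw [Matrix.adjugate_fin_three]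
    ext i j
    fin_cases i <;> fin_cases j <;> simp [Matrix.one_apply]
    · have h := minor3 1 2; simp [hδ] at h; linear_combination h
    · have h := minor2 1 2; simp [hδ] at h; linear_combination -h
    · have h := minor1 1 2; simp [hδ] at h; linear_combination h
    · have h := minor3 0 2; simp [hδ] at h; linear_combination -h
    · have h := minor2 0 2; simp [hδ] at h; linear_combination h
    · have h := minor1 0 2; simp [hδ] at h; linear_combination -h
    · have h := minor3 0 1; simp [hδ] at h; linear_combination h
    · have h := minor2 0 1; simp [hδ] at h; linear_combination -h
    · have h := minor1 0 1; simp [hδ] at h; linear_combination h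
  have hmul := A.mul_adjugate
  rw [hadj, Matrix.mul_smul, Matrix.mul_one] at hmul
  have hdet : A.det = LinearMap.det (g : (Fin 3 → R) →ₗ[R] (Fin 3 → R)) :=
    LinearMap.det_toMatrix' _
  have hgv : ∀ v, g v = A.mulVec v := fun v => by
    have h := LinearMap.congr_fun
      (Matrix.toLin'_toMatrix' (g : (Fin 3 → R) →ₗ[R] (Fin 3 → R))) v
    rw [Matrix.toLin'_apply] at h
    exact h.symm
  have hlinv : ((l⁻¹ : Rˣ) : R) * (l : R) = 1 := by
    rw [← Units.val_mul, inv_mul_cancel, Units.val_one]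
  have main : ∀ v : Fin 3 → R,
      g v = (((l⁻¹ : Rˣ) : R) * LinearMap.det (g : (Fin 3 → R) →ₗ[R] (Fin 3 → R))) • v := by
    intro v
    rw [hgv, ← hdet]
    have h2 : A.mulVec v = ((l⁻¹ : Rˣ) : R) • ((l : R) • A).mulVec v := by
      rw [Matrix.smul_mulVec, smul_smul, hlinv, one_smul]
    rw [h2, hmul, Matrix.smul_mulVec, Matrix.one_mulVec, smul_smul]
  refine ⟨main, fun hl1 => ?_⟩
  subst hl1
  constructor
  · intro v
    simpa using main v
  · have hd := Matrix.det_adjugate A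
    rw [hadj] at hd
    simp only [Units.val_one, one_smul, Matrix.det_one, Fintype.card_fin] at hd
    norm_num at hd
    rw [← hdet]
    exact hd.symm
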